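/- Let p be an odd prime. The number of solutions x with 1 ≤ x ≤ p^e(p-1), p ∤ x, to x^x ≡ x (mod p^e) equals Σ_{x0=1}^{p-1} gcd(p-1, x0−1) + (p-1)·(p^⌊e/2⌋ − 1). -/

import Mathlib

open Finset

lemma cast_eq_one_iff_dvd (M m : ℕ) [NeZero M] (hm : 1 ≤ m) :
    ((m : ℕ) : ZMod M) = 1 ↔ M ∣ m - 1 := by
  rw [← Nat.cast_one, ZMod.natCast_eq_natCast_iff, Nat.ModEq.comm, ← Nat.modEq_iff_dvd' hm]


lemma pow_one_add_p (p e n : ℕ) [hp : Fact p.Prime] (hp2 : p ≠ 2) (hn : 0 < n) [NeZero (p^e)] :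
    (((1 + p : ℕ)) : ZMod (p^e)) ^ n = 1 ↔ (e : ℕ∞) ≤ 1 + emultiplicity p n := by
  have hodd : Odd p := hp.out.odd_of_ne_two hp2
  have hpd : ¬ p ∣ 1 + p := by
    intro h
    rw [add_comm] at h
    have := (Nat.dvd_add_right (dvd_refl p)).mp h
    simp [Nat.dvd_one] at this
    exact hp.out.one_lt.ne' this
  have hlte := Nat.emultiplicity_pow_sub_pow hp.out hodd (x := 1 + p) (y := 1)
    (by simp) hpd n
  simp only [one_pow, Nat.add_sub_cancel_left] at hlte
  rw [hp.out.emultiplicity_self] at hlte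
  rw [← Nat.cast_pow, cast_eq_one_iff_dvd _ _ (Nat.one_le_iff_ne_zero.mpr (by positivity)),
    pow_dvd_iff_le_emultiplicity, hlte]


lemma orderOf_one_add_p (p e : ℕ) [hp : Fact p.Prime] (hp2 : p ≠ 2) (he : 1 ≤ e) [NeZero (p^e)] :
    orderOf (((1 + p : ℕ)) : ZMod (p^e)) = p ^ (e - 1) := by
  rcases eq_or_lt_of_le he with h1 | h2
  · subst h1
    have : (((1 + p : ℕ)) : ZMod (p^1)) = 1 := by
      push_cast
      rw [show ((p:ℕ) : ZMod (p^1)) = 0 from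
        (ZMod.natCast_eq_zero_iff p (p^1)).mpr (by simp), add_zero]
    rw [this]
    simp
  · have he2 : 2 ≤ e := h2
    have hcast : ∀ k : ℕ, (1 : ℕ∞) + (k : ℕ) = ((k + 1 : ℕ) : ℕ∞) := by
      intro k; rw [← Nat.cast_one, ← Nat.cast_add, add_comm]
    have h1 : (((1 + p : ℕ)) : ZMod (p^e)) ^ (p ^ (e-1)) = 1 := by
      rw [pow_one_add_p p e _ hp2 (pow_pos hp.out.pos _)]
      rw [Nat.Prime.emultiplicity_pow_self hp.out, hcast, Nat.cast_le]
      omega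
    have h0 : ¬ (((1 + p : ℕ)) : ZMod (p^e)) ^ (p ^ (e-2)) = 1 := by
      rw [pow_one_add_p p e _ hp2 (pow_pos hp.out.pos _)]
      rw [Nat.Prime.emultiplicity_pow_self hp.out, hcast, Nat.cast_le]
      omega
    have := orderOf_eq_prime_pow (p := p) (n := e - 2) h0 (by rwa [show e - 2 + 1 = e - 1 by omega])
    rwa [show e - 2 + 1 = e - 1 by omega] at this


lemma zmod_units_isCyclic (p e : ℕ) [hp : Fact p.Prime] (hp2 : p ≠ 2) (he : 1 ≤ e)
    [NeZero (p^e)] : IsCyclic (ZMod (p^e))ˣ := by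
  have hp3 : 3 ≤ p := by
    rcases hp.out.two_le.lt_or_eq with h | h
    · omega
    · omega
  have hcardp : Fintype.card (ZMod p)ˣ = p - 1 := by
    rw [ZMod.card_units_eq_totient, Nat.totient_prime hp.out]
  have hcard : Fintype.card (ZMod (p^e))ˣ = p ^ (e-1) * (p - 1) := by
    rw [ZMod.card_units_eq_totient, Nat.totient_prime_pow hp.out he]
  have hcop : Nat.Coprime (p ^ (e-1)) (p - 1) := by
    apply Nat.Coprime.pow_left
    rw [Nat.coprime_comm, Nat.coprime_self_sub_left hp.out.one_le]
    simp
  -- generator of (ZMod p)ˣ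
  obtain ⟨g, hg⟩ := IsCyclic.exists_generator (α := (ZMod p)ˣ)
  have hog : orderOf g = p - 1 := by
    rw [orderOf_eq_card_of_forall_mem_zpowers hg, Nat.card_eq_fintype_card, hcardp]
  have hdvd : p ∣ p ^ e := dvd_pow_self p (by omega)
  obtain ⟨G, hG⟩ := ZMod.unitsMap_surjective hdvd g
  set c := G ^ (p ^ (e-1)) with hc
  have hc1 : c ^ (p - 1) = 1 := by
    rw [hc, ← pow_mul, ← hcard, pow_card_eq_one]
  have hcdvd : orderOf c ∣ p - 1 := orderOf_dvd_of_pow_eq_one hc1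
  have hc2 : p - 1 ∣ orderOf c := by
    have h1 : ZMod.unitsMap hdvd c = g ^ (p ^ (e-1)) := by
      rw [hc, map_pow, hG]
    have h2 : orderOf (g ^ (p ^ (e-1))) = p - 1 := by
      rw [orderOf_pow, hog, Nat.Coprime.gcd_eq_one (Nat.Coprime.symm hcop), Nat.div_one]
    calc p - 1 = orderOf (ZMod.unitsMap hdvd c) := by rw [h1, h2]
    _ ∣ orderOf c := orderOf_map_dvd _ _
  have hoc : orderOf c = p - 1 := Nat.dvd_antisymm hcdvd hc2
  have hcop2 : Nat.Coprime (1 + p) (p ^ e) := by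
    apply Nat.Coprime.pow_right
    simp [Nat.coprime_comm]
  set b := ZMod.unitOfCoprime (1 + p) hcop2 with hb
  have hob : orderOf b = p ^ (e - 1) := by
    rw [← orderOf_units, ZMod.coe_unitOfCoprime]
    exact_mod_cast orderOf_one_add_p p e hp2 he
  have hcomm : Commute b c := mul_comm b c
  have hoa : orderOf (b * c) = p ^ (e-1) * (p - 1) := by
    rw [hcomm.orderOf_mul_eq_mul_orderOf_of_coprime (by rw [hob, hoc]; exact hcop), hob, hoc]
  exact isCyclic_of_orderOf_eq_card (b * c)
    (by rw [hoa, Nat.card_eq_fintype_card, hcard])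


lemma card_ker_unitsMap (p e t : ℕ) [hp : Fact p.Prime] (ht : 1 ≤ t) (hte : t ≤ e)
    [NeZero (p^e)] [NeZero (p^t)] :
    Nat.card (ZMod.unitsMap (pow_dvd_pow p hte)).ker = p ^ (e - t) := by
  set Φ := ZMod.unitsMap (pow_dvd_pow p hte) with hΦ
  have hsur : Function.Surjective Φ := ZMod.unitsMap_surjective _
  have h1 : Φ.ker.index = Nat.card (ZMod (p^t))ˣ := by
    rw [Subgroup.index_ker, MonoidHom.range_eq_top.mpr hsur, Subgroup.card_top]
  have h2 := Subgroup.card_mul_index Φ.ker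
  rw [h1] at h2
  have hct : Nat.card (ZMod (p^t))ˣ = p^(t-1) * (p-1) := by
    rw [Nat.card_eq_fintype_card, ZMod.card_units_eq_totient, Nat.totient_prime_pow hp.out ht]
  have hce : Nat.card (ZMod (p^e))ˣ = p^(e-1) * (p-1) := by
    rw [Nat.card_eq_fintype_card, ZMod.card_units_eq_totient,
      Nat.totient_prime_pow hp.out (le_trans ht hte)]
  rw [hct, hce] at h2
  have hkey : p^(e-t) * (p^(t-1) * (p-1)) = p^(e-1) * (p-1) := by
    rw [← mul_assoc, ← pow_add]
    congr 2
    omega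
  have hpos : 0 < p^(t-1) * (p-1) := by
    have := hp.out.two_le
    have : 0 < p ^ (t-1) := pow_pos hp.out.pos _
    have : 0 < p - 1 := by omega
    positivity
  exact Nat.eq_of_mul_eq_mul_right hpos (h2.trans hkey.symm)


lemma mem_ker_iff_pow (p e t : ℕ) [hp : Fact p.Prime] (hp2 : p ≠ 2) (ht : 1 ≤ t) (hte : t ≤ e)
    [NeZero (p^e)] [NeZero (p^t)] (u : (ZMod (p^e))ˣ) :
    ZMod.unitsMap (pow_dvd_pow p hte) u = 1 ↔ u ^ (p ^ (e - t)) = 1 := by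
  haveI := zmod_units_isCyclic p e hp2 (le_trans ht hte)
  set Φ := ZMod.unitsMap (pow_dvd_pow p hte) with hΦ
  have hcard := card_ker_unitsMap p e t ht hte
  constructor
  · intro h
    have hmem : u ∈ Φ.ker := h
    have := Subgroup.orderOf_dvd_natCard Φ.ker hmem
    rw [hcard] at this
    exact orderOf_dvd_iff_pow_eq_one.mp this
  · intro h
    classical
    -- finset of ker
    have hsub : (Φ.ker : Set (ZMod (p^e))ˣ).toFinset ⊆
        (univ.filter fun w : (ZMod (p^e))ˣ => w ^ (p^(e-t)) = 1) := by
      intro w hw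
      rw [Set.mem_toFinset] at hw
      simp only [mem_filter, mem_univ, true_and]
      have := Subgroup.orderOf_dvd_natCard Φ.ker hw
      rw [hcard] at this
      exact orderOf_dvd_iff_pow_eq_one.mp this
    have hle : (univ.filter fun w : (ZMod (p^e))ˣ => w ^ (p^(e-t)) = 1).card ≤ p^(e-t) :=
      IsCyclic.card_pow_eq_one_le (pow_pos hp.out.pos _)
    have hkercard : (Φ.ker : Set (ZMod (p^e))ˣ).toFinset.card = p^(e-t) := by
      rw [Set.toFinset_card, ← Nat.card_eq_fintype_card]
      exact hcard
    have heq := Finset.eq_of_subset_of_card_le hsub (by rw [hkercard]; exact hle)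
    have : u ∈ (Φ.ker : Set (ZMod (p^e))ˣ).toFinset := by
      rw [heq]
      simp [h]
    rw [Set.mem_toFinset] at this
    exact this


lemma count_mod (m q r : ℕ) (hm : 0 < m) (hr : r < m) :
    ((Finset.range (m*q)).filter (fun x => x % m = r)).card = q := by
  conv_rhs => rw [← Finset.card_range q]
  apply Finset.card_bij' (fun x _ => x / m) (fun k _ => m * k + r)
  · intro x hx
    simp only [mem_filter, mem_range] at hx
    simp only [mem_range]
    exact Nat.div_lt_of_lt_mul (by omega)
  · intro k hk
    simp only [mem_range] at hk
    simp only [mem_filter, mem_range]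
    constructor
    · calc m * k + r < m * k + m := by omega
      _ = m * (k+1) := by ring
      _ ≤ m * q := Nat.mul_le_mul_left m hk
    · rw [Nat.mul_add_mod, Nat.mod_eq_of_lt hr]
  · intro x hx
    simp only [mem_filter, mem_range] at hx
    rw [← hx.2]
    exact Nat.div_add_mod x m
  · intro k _
    rw [Nat.mul_add_div hm, Nat.div_eq_of_lt hr, add_zero]


lemma crt_count (a b : ℕ) [NeZero a] [NeZero b] (h : Nat.Coprime a b)
    (A : ZMod a) (B : ZMod b) (q : ℕ) :
    ((Finset.range (a*b*q)).filter
      (fun x : ℕ => ((x : ZMod a) = A ∧ (x : ZMod b) = B))).card = q := by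
  haveI : NeZero (a*b) := ⟨mul_ne_zero (NeZero.ne a) (NeZero.ne b)⟩
  set C := (ZMod.chineseRemainder h).symm (A, B) with hC
  have key : ∀ x : ℕ, ((x : ZMod a) = A ∧ (x : ZMod b) = B) ↔ x % (a*b) = C.val := by
    intro x
    have h1 : (ZMod.chineseRemainder h) (x : ZMod (a*b)) = ((x : ZMod a), (x : ZMod b)) := by
      rw [map_natCast]
      simp [Prod.ext_iff]
    constructor
    · rintro ⟨hA, hB⟩
      have : (ZMod.chineseRemainder h) (x : ZMod (a*b)) = (A, B) := by rw [h1, hA, hB]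
      have hx : (x : ZMod (a*b)) = C := by
        rw [hC, ← this, RingEquiv.symm_apply_apply]
      have := congrArg ZMod.val hx
      rwa [ZMod.val_natCast] at this
    · intro hx
      have hx' : (x : ZMod (a*b)) = C := by
        rw [← ZMod.natCast_mod, hx]
        exact ZMod.natCast_rightInverse C
      have := congrArg (ZMod.chineseRemainder h) hx'
      rw [h1, hC, RingEquiv.apply_symm_apply] at this
      exact ⟨congrArg Prod.fst this, congrArg Prod.snd this⟩
  have : ((Finset.range (a*b*q)).filter (fun x : ℕ => ((x : ZMod a) = A ∧ (x : ZMod b) = B)))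
      = ((Finset.range (a*b*q)).filter (fun x => x % (a*b) = C.val)) := by
    apply Finset.filter_congr
    intro x _
    exact (by simpa using key x)
  rw [this, count_mod _ _ _ (Nat.pos_of_ne_zero (NeZero.ne _)) (ZMod.val_lt C)]


lemma sum_totient_prime_pow (p L : ℕ) (hp : p.Prime) :
    ∑ j ∈ Finset.Icc 1 L, (p^j).totient = p^L - 1 := by
  induction L with
  | zero => simp
  | succ L ih =>
    rw [Finset.sum_Icc_succ_top (by omega), ih, Nat.totient_prime_pow hp (by omega)]
    have h1 : 1 ≤ p^L := Nat.one_le_pow _ _ hp.pos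
    have h2 : p^L ≤ p^(L+1) := Nat.pow_le_pow_right hp.pos (by omega)
    have h3 : p^(L+1-1)*(p-1) = p^(L+1) - p^L := by
      rw [Nat.mul_sub, mul_one, Nat.add_sub_cancel, ← pow_succ]
    omega


lemma sum_gcd_eq (q : ℕ) (hq : 0 < q) :
    ∑ c ∈ Finset.range q, Nat.gcd q c = ∑ d ∈ q.divisors, d.totient * (q / d) := by
  rw [← Finset.sum_fiberwise_of_maps_to (g := fun c => Nat.gcd q c) (t := q.divisors)
    (fun c _ => Nat.mem_divisors.mpr ⟨Nat.gcd_dvd_left _ _, hq.ne'⟩)]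
  -- now ∑ g ∈ divisors, ∑ c in fiber, gcd q c  = ∑ d, φ d * (q/d)
  rw [← Nat.sum_div_divisors q (fun d => d.totient * (q / d))]
  apply Finset.sum_congr rfl
  intro g hg
  obtain ⟨hgdvd, -⟩ := Nat.mem_divisors.mp hg
  have hgpos : 0 < g := Nat.pos_of_dvd_of_pos hgdvd hq
  have hdiv : q / (q / g) = g := Nat.div_div_self hgdvd hq.ne'
  rw [hdiv]
  -- ∑ c in fiber gcd = (q/g).totient * g
  have hfib : ∀ c ∈ (Finset.range q).filter (fun c => Nat.gcd q c = g), Nat.gcd q c = g :=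
    fun c hc => (Finset.mem_filter.mp hc).2
  rw [Finset.sum_congr rfl hfib, Finset.sum_const, smul_eq_mul]
  congr 1
  -- card of fiber = (q/g).totient
  rw [Nat.totient]
  apply Finset.card_bij' (fun c _ => c / g) (fun k _ => g * k)
  · intro c hc
    simp only [mem_filter, mem_range] at hc ⊢
    obtain ⟨hcq, hcg⟩ := hc
    have hgc : g ∣ c := hcg ▸ Nat.gcd_dvd_right q c
    refine ⟨Nat.div_lt_div_of_lt_of_dvd hgdvd hcq, ?_⟩
    obtain ⟨m, hm⟩ := hgdvd
    obtain ⟨k, hk⟩ := hgc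
    subst hm hk
    rw [Nat.mul_div_cancel_left _ hgpos, Nat.mul_div_cancel_left _ hgpos]
    rw [Nat.gcd_mul_left] at hcg
    have h1 : g * Nat.gcd m k = g * 1 := by rw [hcg, mul_one]
    exact Nat.eq_of_mul_eq_mul_left hgpos h1
  · intro k hk
    simp only [mem_filter, mem_range] at hk ⊢
    obtain ⟨hkq, hkcop⟩ := hk
    obtain ⟨m, hm⟩ := hgdvd
    rw [hm, Nat.mul_div_cancel_left _ hgpos] at hkq hkcop
    constructor
    · rw [hm]
      exact (Nat.mul_lt_mul_left hgpos).mpr hkq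
    · rw [hm, Nat.gcd_mul_left, Nat.Coprime.gcd_eq_one hkcop, mul_one]
  · intro c hc
    simp only [mem_filter, mem_range] at hc
    have hgc : g ∣ c := hc.2 ▸ Nat.gcd_dvd_right q c
    exact Nat.mul_div_cancel' hgc
  · intro k _
    exact Nat.mul_div_cancel_left _ hgpos


lemma step7 (p e : ℕ) (hp : p.Prime) (hp2 : p ≠ 2) (he : 1 ≤ e) :
    ∑ d ∈ (p^(e-1)*(p-1)).divisors,
      d.totient * (if d.factorization p = 0 then (p-1)/d
        else if d ∣ p^(e - d.factorization p) then p-1 else 0)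
    = (∑ x0 ∈ Finset.Icc 1 (p-1), Nat.gcd (p-1) (x0-1)) + (p-1)*(p^(e/2)-1) := by
  have hp3 : 3 ≤ p := by rcases hp.two_le.lt_or_eq with h | h <;> omega
  set q := p - 1 with hqdef
  have hq : 0 < q := by omega
  set n := p^(e-1)*q with hndef
  have hn : n ≠ 0 := by positivity
  set W : ℕ → ℕ := fun d => if d.factorization p = 0 then q/d
        else if d ∣ p^(e - d.factorization p) then q else 0 with hW
  rw [← Finset.sum_filter_add_sum_filter_not n.divisors (fun d => p ∣ d) (fun d => d.totient * W d)]
  have partNot : ∑ d ∈ n.divisors.filter (fun d => ¬ p ∣ d), d.totient * W d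
      = ∑ x0 ∈ Finset.Icc 1 q, Nat.gcd q (x0-1) := by
    have hset : n.divisors.filter (fun d => ¬ p ∣ d) = q.divisors := by
      ext d
      simp only [mem_filter, Nat.mem_divisors]
      constructor
      · rintro ⟨⟨hdn, -⟩, hpd⟩
        refine ⟨?_, hq.ne'⟩
        have hcop : Nat.Coprime d (p^(e-1)) :=
          Nat.Coprime.pow_right _ (Nat.coprime_comm.mp (hp.coprime_iff_not_dvd.mpr hpd))
        exact hcop.dvd_of_dvd_mul_left hdn
      · rintro ⟨hdq, -⟩
        refine ⟨⟨Dvd.dvd.mul_left hdq _, hn⟩, ?_⟩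
        intro hpd
        have := Nat.le_of_dvd hq (hpd.trans hdq)
        omega
    rw [hset]
    have : ∀ d ∈ q.divisors, d.totient * W d = d.totient * (q / d) := by
      intro d hd
      have hdq := (Nat.mem_divisors.mp hd).1
      have hpd : ¬ p ∣ d := by
        intro hpd
        have := Nat.le_of_dvd hq (hpd.trans hdq)
        omega
      simp [hW, Nat.factorization_eq_zero_of_not_dvd hpd]
    rw [Finset.sum_congr rfl this, ← sum_gcd_eq q hq]
    -- reindex range q → Icc 1 q
    apply Finset.sum_nbij' (fun c => c + 1) (fun x0 => x0 - 1)
    · intro c hc; simp only [mem_range] at hc; simp only [mem_Icc]; omega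
    · intro x hx; simp only [mem_Icc] at hx; simp only [mem_range]; omega
    · intro c _; omega
    · intro x hx; simp only [mem_Icc] at hx; omega
    · intro c _; simp
  have partP : ∑ d ∈ n.divisors.filter (fun d => p ∣ d), d.totient * W d
      = q * (p^(e/2) - 1) := by
    set L := e/2 with hL
    set B := (Finset.Icc 1 L).image (p ^ ·) with hB
    have hBsub : B ⊆ n.divisors.filter (fun d => p ∣ d) := by
      intro d hd
      rw [hB, Finset.mem_image] at hd
      obtain ⟨j, hj, rfl⟩ := hd
      simp only [mem_Icc] at hj
      rw [mem_filter, Nat.mem_divisors]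
      refine ⟨⟨?_, hn⟩, dvd_pow_self p (by omega)⟩
      exact Dvd.dvd.mul_right (pow_dvd_pow p (by omega)) q
    rw [← Finset.sum_subset hBsub ?zero]
    case zero =>
      intro d hd hdB
      rw [mem_filter, Nat.mem_divisors] at hd
      obtain ⟨⟨hdn, -⟩, hpd⟩ := hd
      have hd0 : d ≠ 0 := fun h => hn (by rw [h] at hdn; exact Nat.eq_zero_of_zero_dvd hdn)
      have ht : 0 < d.factorization p := hp.factorization_pos_of_dvd hd0 hpd
      have hne : ¬ d ∣ p^(e - d.factorization p) := by
        intro hdvd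
        obtain ⟨j, hjle, rfl⟩ := (Nat.dvd_prime_pow hp).mp hdvd
        have hfj : (p^j).factorization p = j := by
          rw [hp.factorization_pow, Finsupp.single_eq_same]
        rw [hfj] at ht hjle
        apply hdB
        rw [hB, Finset.mem_image]
        exact ⟨j, by simp only [mem_Icc]; omega, rfl⟩
      rw [hW]
      simp only [if_neg ht.ne', if_neg hne, mul_zero]
    rw [hB, Finset.sum_image (by
      intro x _ y _ hxy
      exact Nat.pow_right_injective hp.two_le hxy)]
    have : ∀ j ∈ Finset.Icc 1 L, (p^j).totient * W (p^j) = (p^j).totient * q := by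
      intro j hj
      simp only [mem_Icc] at hj
      have hfj : (p^j).factorization p = j := by
        rw [hp.factorization_pow, Finsupp.single_eq_same]
      rw [hW]
      simp only [hfj]
      rw [if_neg (by omega), if_pos (pow_dvd_pow p (by omega))]
    rw [Finset.sum_congr rfl this, ← Finset.sum_mul, sum_totient_prime_pow p L hp, mul_comm]
  rw [partNot, partP, Nat.add_comm]


lemma unit_weight (p e : ℕ) [hp : Fact p.Prime] (hp2 : p ≠ 2) (he : 1 ≤ e)
    [NeZero (p^e)] (w : (ZMod (p^e))ˣ) :
    (if IsUnit (↑w : ZMod (p^e)) ∧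
        p^((orderOf (↑w : ZMod (p^e))).factorization p) ∣ (↑w : ZMod (p^e)).val - 1
      then (p-1) / ((orderOf (↑w : ZMod (p^e))) / p^((orderOf (↑w : ZMod (p^e))).factorization p))
      else 0)
    = (if (orderOf w).factorization p = 0 then (p-1)/(orderOf w)
        else if (orderOf w) ∣ p^(e - (orderOf w).factorization p) then p-1 else 0) := by
  haveI : Fact (1 < p^e) := ⟨by
    have := hp.out.two_le
    calc 1 < p := by omega
    _ = p^1 := (pow_one p).symm
    _ ≤ p^e := Nat.pow_le_pow_right (by omega) he⟩
  rw [orderOf_units]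
  set d := orderOf w with hd
  set t := d.factorization p with ht
  have hcard : Fintype.card (ZMod (p^e))ˣ = p^(e-1) * (p-1) := by
    rw [ZMod.card_units_eq_totient, Nat.totient_prime_pow hp.out he]
  have hddvd : d ∣ p^(e-1) * (p-1) := hcard ▸ orderOf_dvd_card
  have hd0 : d ≠ 0 := (orderOf_pos w).ne'
  rcases Nat.eq_zero_or_pos t with ht0 | ht1
  · have hc1 : IsUnit (↑w : ZMod (p^e)) ∧ p^t ∣ (↑w : ZMod (p^e)).val - 1 := by
      refine ⟨w.isUnit, ?_⟩
      rw [ht0, pow_zero]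
      exact one_dvd _
    rw [if_pos hc1, if_pos ht0, ht0, pow_zero, Nat.div_one]
  · -- t ≥ 1
    have hte1 : t ≤ e - 1 := by
      have hpt : p^t ∣ p^(e-1) * (p-1) := dvd_trans (Nat.ordProj_dvd d p) hddvd
      have hcop : Nat.Coprime (p^t) (p-1) := by
        apply Nat.Coprime.pow_left
        rw [Nat.coprime_comm, Nat.coprime_self_sub_left hp.out.one_le]
        simp
      have := hcop.dvd_of_dvd_mul_right hpt
      exact (Nat.pow_dvd_pow_iff_le_right hp.out.one_lt).mp this
    have hte : t ≤ e := by omega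
    haveI : NeZero (p^t) := ⟨pow_ne_zero _ hp.out.pos.ne'⟩
    have hval1 : 1 ≤ (↑w : ZMod (p^e)).val := by
      rcases Nat.eq_zero_or_pos (↑w : ZMod (p^e)).val with h | h
      · exfalso
        rw [ZMod.val_eq_zero] at h
        exact not_isUnit_zero (h ▸ w.isUnit)
      · exact h
    have hcond : p^t ∣ (↑w : ZMod (p^e)).val - 1 ↔ d ∣ p^(e-t) := by
      rw [← cast_eq_one_iff_dvd (p^t) _ hval1]
      have hcasthom : (((↑w : ZMod (p^e)).val : ℕ) : ZMod (p^t))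
          = ZMod.castHom (pow_dvd_pow p hte) (ZMod (p^t)) (↑w : ZMod (p^e)) := by
        conv_rhs => rw [← ZMod.natCast_zmod_val (↑w : ZMod (p^e))]
        rw [map_natCast]
      rw [hcasthom]
      have hunits : ZMod.castHom (pow_dvd_pow p hte) (ZMod (p^t)) (↑w : ZMod (p^e)) = 1
          ↔ ZMod.unitsMap (pow_dvd_pow p hte) w = 1 := by
        rw [Units.ext_iff, ZMod.unitsMap_def]
        simp [Units.coe_map]
      rw [hunits, mem_ker_iff_pow p e t hp2 ht1 hte w, orderOf_dvd_iff_pow_eq_one]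
    by_cases hdvd : d ∣ p^(e-t)
    · obtain ⟨j, hjle, hdj⟩ := (Nat.dvd_prime_pow hp.out).mp hdvd
      have hfj : t = j := by
        rw [ht, hdj, hp.out.factorization_pow, Finsupp.single_eq_same]
      have hq1 : d / p^t = 1 := by
        rw [hdj, hfj, Nat.div_self (pow_pos hp.out.pos j)]
      rw [if_pos (⟨w.isUnit, hcond.mpr hdvd⟩ : IsUnit (↑w : ZMod (p^e)) ∧ p^t ∣ (↑w : ZMod (p^e)).val - 1),
        if_neg (show ¬ t = 0 by omega), if_pos hdvd, hq1, Nat.div_one]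
    · rw [if_neg (show ¬(IsUnit (↑w : ZMod (p^e)) ∧ p^t ∣ (↑w : ZMod (p^e)).val - 1) from
          fun h => hdvd (hcond.mp h.2)),
        if_neg (show ¬ t = 0 by omega), if_neg hdvd]


lemma sum_F_eq (p e : ℕ) [hp : Fact p.Prime] (hp2 : p ≠ 2) (he : 1 ≤ e) [NeZero (p^e)] :
    (∑ u : ZMod (p^e), if IsUnit u ∧ p^((orderOf u).factorization p) ∣ u.val - 1
        then (p-1) / ((orderOf u) / p^((orderOf u).factorization p)) else 0)
    = ∑ d ∈ (p^(e-1)*(p-1)).divisors, d.totient *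
        (if d.factorization p = 0 then (p-1)/d
         else if d ∣ p^(e - d.factorization p) then p-1 else 0) := by
  classical
  haveI hcyc := zmod_units_isCyclic p e hp2 he
  have hcard : Fintype.card (ZMod (p^e))ˣ = p^(e-1) * (p-1) := by
    rw [ZMod.card_units_eq_totient, Nat.totient_prime_pow hp.out he]
  set F : ZMod (p^e) → ℕ := fun u =>
    if IsUnit u ∧ p^((orderOf u).factorization p) ∣ u.val - 1
      then (p-1) / ((orderOf u) / p^((orderOf u).factorization p)) else 0 with hF
  set W : ℕ → ℕ := fun d =>
    if d.factorization p = 0 then (p-1)/d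
      else if d ∣ p^(e - d.factorization p) then p-1 else 0 with hW
  have h1 : ∑ u : ZMod (p^e), F u = ∑ u ∈ Finset.univ.filter IsUnit, F u := by
    rw [Finset.sum_filter_of_ne]
    intro x _ hx
    by_contra hu
    apply hx
    rw [hF]
    exact if_neg (fun h => hu h.1)
  have h2 : ∑ u ∈ Finset.univ.filter IsUnit, F u = ∑ w : (ZMod (p^e))ˣ, F ↑w := by
    apply Finset.sum_nbij' (i := fun u => if h : IsUnit u then h.unit else 1)
      (j := fun w => (↑w : ZMod (p^e)))
    · intro a _; exact Finset.mem_univ _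
    · intro w _
      simp only [Finset.mem_filter, Finset.mem_univ, true_and]
      exact w.isUnit
    · intro a ha
      simp only [Finset.mem_filter] at ha
      rw [dif_pos ha.2, IsUnit.unit_spec]
    · intro w _
      rw [dif_pos w.isUnit]
      ext
      rw [IsUnit.unit_spec]
    · intro a ha
      simp only [Finset.mem_filter] at ha
      rw [dif_pos ha.2, IsUnit.unit_spec]
  have h3 : ∑ w : (ZMod (p^e))ˣ, F ↑w = ∑ w : (ZMod (p^e))ˣ, W (orderOf w) := by
    apply Finset.sum_congr rfl
    intro w _
    rw [hF, hW]
    exact unit_weight p e hp2 he w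
  have h4 : ∑ w : (ZMod (p^e))ˣ, W (orderOf w)
      = ∑ d ∈ (p^(e-1)*(p-1)).divisors, d.totient * W d := by
    rw [← Finset.sum_fiberwise_of_maps_to (g := fun w : (ZMod (p^e))ˣ => orderOf w)
      (t := (p^(e-1)*(p-1)).divisors) ?hmap]
    case hmap =>
      intro w _
      rw [Nat.mem_divisors]
      refine ⟨hcard ▸ orderOf_dvd_card, ?_⟩
      have h1 : 0 < p - 1 := by have := hp.out.two_le; omega
      have h2 : 0 < p^(e-1) := pow_pos hp.out.pos _
      exact Nat.mul_ne_zero h2.ne' h1.ne'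
    apply Finset.sum_congr rfl
    intro d hd
    have hsum : ∀ w ∈ Finset.univ.filter (fun w : (ZMod (p^e))ˣ => orderOf w = d),
        W (orderOf w) = W d := by
      intro w hw
      rw [(Finset.mem_filter.mp hw).2]
    rw [Finset.sum_congr rfl hsum, Finset.sum_const, smul_eq_mul]
    congr 1
    rw [IsCyclic.card_orderOf_eq_totient]
    rw [hcard]
    exact (Nat.mem_divisors.mp hd).1
  rw [h1, h2, h3, h4]


lemma count_eq_sum_F (p e : ℕ) [hp : Fact p.Prime] (hp2 : p ≠ 2) (he : 1 ≤ e) [NeZero (p^e)] :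
    ((Finset.Icc 1 (p ^ e * (p - 1))).filter fun x : ℕ =>
        ¬ p ∣ x ∧ (x : ZMod (p ^ e)) ^ x = (x : ZMod (p ^ e))).card
    = ∑ u : ZMod (p^e), (if IsUnit u ∧ p^((orderOf u).factorization p) ∣ u.val - 1
        then (p-1) / ((orderOf u) / p^((orderOf u).factorization p)) else 0) := by
  classical
  haveI : Fact (1 < p^e) := ⟨by
    have := hp.out.two_le
    calc 1 < p := by omega
    _ = p^1 := (pow_one p).symm
    _ ≤ p^e := Nat.pow_le_pow_right (by omega) he⟩
  have hp3 : 3 ≤ p := by rcases hp.out.two_le.lt_or_eq with h | h <;> omega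
  set N := p^e * (p-1) with hN
  set Q : ℕ → Prop := fun x => ¬ p ∣ x ∧ (x : ZMod (p ^ e)) ^ x = (x : ZMod (p ^ e)) with hQ
  have hQ0 : ¬ Q 0 := fun h => h.1 (dvd_zero p)
  have hQN : ¬ Q N := fun h => h.1 (dvd_trans (dvd_pow_self p (by omega)) (dvd_mul_right _ _))
  have hunit_iff : ∀ x : ℕ, IsUnit ((x : ℕ) : ZMod (p^e)) ↔ ¬ p ∣ x := by
    intro x
    rw [ZMod.isUnit_iff_coprime]
    constructor
    · intro h hdvd
      have : p ∣ Nat.gcd x (p^e) := Nat.dvd_gcd hdvd (dvd_pow_self p (by omega))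
      rw [h] at this
      simp [Nat.dvd_one] at this
      omega
    · intro h
      exact Nat.Coprime.pow_right _ (Nat.coprime_comm.mp (hp.out.coprime_iff_not_dvd.mpr h))
  -- step 1 : Icc → range
  have step1 : (Finset.Icc 1 N).filter Q = (Finset.range N).filter Q := by
    ext x
    simp only [Finset.mem_filter, Finset.mem_Icc, Finset.mem_range]
    constructor
    · rintro ⟨⟨h1, h2⟩, hq⟩
      refine ⟨?_, hq⟩
      rcases h2.lt_or_eq with h | rfl
      · exact h
      · exact absurd hq hQN
    · rintro ⟨h1, hq⟩
      refine ⟨⟨?_, by omega⟩, hq⟩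
      rcases Nat.eq_zero_or_pos x with rfl | h
      · exact absurd hq hQ0
      · exact h
  rw [step1]
  -- step 2 : fiberwise
  rw [Finset.card_eq_sum_card_fiberwise (f := fun x : ℕ => ((x : ℕ) : ZMod (p^e)))
    (t := Finset.univ) (fun x _ => Finset.mem_univ _)]
  -- step 3 : compute each fiber
  apply Finset.sum_congr rfl
  intro u _
  rw [Finset.filter_filter]
  by_cases hu : IsUnit u
  case neg =>
    rw [if_neg (fun h => hu h.1), Finset.card_eq_zero]
    apply Finset.eq_empty_of_forall_notMem
    intro x hx
    rw [Finset.mem_filter] at hx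
    obtain ⟨-, hq, hxu⟩ := hx
    exact hu (hxu ▸ (hunit_iff x).mpr hq.1)
  case pos =>
    set d := orderOf u with hd
    set t := d.factorization p with ht
    set d' := d / p^t with hd'
    have hcard : Fintype.card (ZMod (p^e))ˣ = p^(e-1) * (p-1) := by
      rw [ZMod.card_units_eq_totient, Nat.totient_prime_pow hp.out he]
    have hdw : d = orderOf hu.unit := by rw [hd, ← orderOf_units, IsUnit.unit_spec]
    have hddvd : d ∣ p^(e-1) * (p-1) := by rw [hdw]; exact hcard ▸ orderOf_dvd_card
    have hd0 : d ≠ 0 := by rw [hdw]; exact (orderOf_pos hu.unit).ne'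
    have hdfact : p^t * d' = d := Nat.ordProj_mul_ordCompl_eq_self d p
    have hcoptd : Nat.Coprime (p^t) d' := Nat.Coprime.pow_left _ (Nat.coprime_ordCompl hp.out hd0)
    have hd'0 : d' ≠ 0 := by
      intro h
      rw [h, mul_zero] at hdfact
      exact hd0 hdfact.symm
    haveI : NeZero d' := ⟨hd'0⟩
    have hcop_p_d' : Nat.Coprime p d' := Nat.coprime_ordCompl hp.out hd0
    have hd'q : d' ∣ p - 1 := by
      have h1 : d' ∣ p^(e-1) * (p-1) := dvd_trans (Nat.ordCompl_dvd d p) hddvd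
      exact (Nat.Coprime.pow_right _ (Nat.coprime_comm.mp hcop_p_d')).dvd_of_dvd_mul_left h1
    have hte : t ≤ e := by
      have hpt : p^t ∣ p^(e-1) * (p-1) := dvd_trans (Nat.ordProj_dvd d p) hddvd
      have hcop : Nat.Coprime (p^t) (p-1) := by
        apply Nat.Coprime.pow_left
        rw [Nat.coprime_comm, Nat.coprime_self_sub_left hp.out.one_le]
        simp
      have := (Nat.pow_dvd_pow_iff_le_right hp.out.one_lt).mp (hcop.dvd_of_dvd_mul_right hpt)
      omega
    haveI : NeZero (p^t) := ⟨pow_ne_zero _ hp.out.pos.ne'⟩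
    have huval1 : 1 ≤ u.val := by
      rcases Nat.eq_zero_or_pos u.val with h | h
      · exact absurd (ZMod.val_eq_zero u |>.mp h ▸ hu) not_isUnit_zero
      · exact h
    -- key pointwise equivalence
    have key : ∀ x : ℕ, ((Q x ∧ ((x : ℕ) : ZMod (p^e)) = u) ↔
        ((((x : ℕ) : ZMod (p^e)) = u ∧ ((x : ℕ) : ZMod d') = 1) ∧ p^t ∣ u.val - 1)) := by
      intro x
      constructor
      · rintro ⟨⟨hpx, hpow⟩, hxu⟩
        have hx1 : 1 ≤ x := by
          rcases Nat.eq_zero_or_pos x with rfl | h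
          · exfalso
            rw [Nat.cast_zero] at hxu
            rw [← hxu] at hu
            exact not_isUnit_zero hu
          · exact h
        have hdvd : d ∣ x - 1 := by
          rw [hd, ← hxu, orderOf_dvd_iff_pow_eq_one]
          have hx : x = (x-1)+1 := by omega
          have h2 : ((x : ℕ) : ZMod (p^e)) ^ ((x-1)+1) = ((x : ℕ) : ZMod (p^e)) := hx ▸ hpow
          rw [pow_succ] at h2
          have h3 : ((x : ℕ) : ZMod (p^e)) ^ (x-1) * ((x : ℕ) : ZMod (p^e))
              = 1 * ((x : ℕ) : ZMod (p^e)) := by rw [h2, one_mul]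
          exact (hxu ▸ hu).mul_right_cancel h3
        refine ⟨⟨hxu, ?_⟩, ?_⟩
        · rw [cast_eq_one_iff_dvd d' x hx1]
          exact dvd_trans (Dvd.intro_left _ hdfact) hdvd
        · -- p^t ∣ u.val - 1
          have hxt : p^t ∣ x - 1 := dvd_trans (Dvd.intro _ hdfact) hdvd
          have hmod : x ≡ u.val [MOD p^t] := by
            have h1 : u.val = x % p^e := by rw [← hxu, ZMod.val_natCast]
            have h2 : x ≡ x % p^e [MOD p^e] := (Nat.mod_modEq x (p^e)).symm
            rw [← h1] at h2
            exact Nat.ModEq.of_dvd (pow_dvd_pow p hte) h2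
          rw [← Nat.modEq_iff_dvd' huval1]
          calc (1:ℕ) ≡ x [MOD p^t] := (Nat.modEq_iff_dvd' hx1).mpr hxt
          _ ≡ u.val [MOD p^t] := hmod
      · rintro ⟨⟨hxu, hx1d⟩, hcond⟩
        have hx1 : 1 ≤ x := by
          rcases Nat.eq_zero_or_pos x with rfl | h
          · exfalso
            rw [Nat.cast_zero] at hxu
            rw [← hxu] at hu
            exact not_isUnit_zero hu
          · exact h
        have hpx : ¬ p ∣ x := (hunit_iff x).mp (hxu ▸ hu)
        have hd'dvd : d' ∣ x - 1 := (cast_eq_one_iff_dvd d' x hx1).mp hx1d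
        have hmod : x ≡ u.val [MOD p^t] := by
          have h1 : u.val = x % p^e := by rw [← hxu, ZMod.val_natCast]
          have h2 : x ≡ x % p^e [MOD p^e] := (Nat.mod_modEq x (p^e)).symm
          rw [← h1] at h2
          exact Nat.ModEq.of_dvd (pow_dvd_pow p hte) h2
        have hxt : p^t ∣ x - 1 := by
          rw [← Nat.modEq_iff_dvd' hx1]
          calc (1:ℕ) ≡ u.val [MOD p^t] := (Nat.modEq_iff_dvd' huval1).mpr hcond
          _ ≡ x [MOD p^t] := hmod.symm
        have hdvd : d ∣ x - 1 := by
          rw [← hdfact]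
          exact Nat.Coprime.mul_dvd_of_dvd_of_dvd hcoptd hxt hd'dvd
        refine ⟨⟨hpx, ?_⟩, hxu⟩
        rw [hd, ← hxu, orderOf_dvd_iff_pow_eq_one] at hdvd
        have hx : x = (x-1)+1 := by omega
        calc ((x : ℕ) : ZMod (p^e)) ^ x = ((x : ℕ) : ZMod (p^e)) ^ ((x-1)+1) := by rw [← hx]
        _ = ((x : ℕ) : ZMod (p^e)) ^ (x-1) * ((x : ℕ) : ZMod (p^e)) := pow_succ _ _
        _ = 1 * ((x : ℕ) : ZMod (p^e)) := by rw [hdvd]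
        _ = ((x : ℕ) : ZMod (p^e)) := one_mul _
    by_cases hcond : p^t ∣ u.val - 1
    · rw [if_pos ⟨hu, hcond⟩]
      have hfil : (Finset.range N).filter (fun x => Q x ∧ ((x : ℕ) : ZMod (p^e)) = u)
          = (Finset.range N).filter
            (fun x : ℕ => ((x : ℕ) : ZMod (p^e)) = u ∧ ((x : ℕ) : ZMod d') = 1) := by
        apply Finset.filter_congr
        intro x _
        rw [key x]
        simp [hcond]
      rw [hfil]
      have hNf : N = p^e * d' * ((p-1)/d') := by
        rw [mul_assoc, Nat.mul_div_cancel' hd'q]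
      have hcop : Nat.Coprime (p^e) d' := Nat.Coprime.pow_left _ hcop_p_d'
      rw [hNf]
      exact crt_count (p^e) d' hcop u 1 ((p-1)/d')
    · rw [if_neg (fun h => hcond h.2), Finset.card_eq_zero]
      apply Finset.eq_empty_of_forall_notMem
      intro x hx
      rw [Finset.mem_filter] at hx
      exact hcond ((key x).mp hx.2).2


theorem stmt_9 (p e : ℕ) [Fact p.Prime] (hp2 : p ≠ 2) (he : 1 ≤ e) :
    ((Finset.Icc 1 (p ^ e * (p - 1))).filter fun x : ℕ =>
        ¬ p ∣ x ∧ (x : ZMod (p ^ e)) ^ x = (x : ZMod (p ^ e))).card =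
      (∑ x0 ∈ Finset.Icc 1 (p - 1), Nat.gcd (p - 1) (x0 - 1)) +
      (p - 1) * (p ^ (e / 2) - 1) := by
  haveI : NeZero (p^e) := ⟨pow_ne_zero _ (Fact.out (p := p.Prime)).pos.ne'⟩
  rw [count_eq_sum_F p e hp2 he, sum_F_eq p e hp2 he,
    step7 p e (Fact.out (p := p.Prime)) hp2 he]
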